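/- Let ξ ∈ (0,1) and η ∈ (ξ,1) be fixed. Then there exists M = M(ξ,η) > 0 such that for every real x > M there exists a positive integer n with (F_Λ(n) − F_Λ(ηn))/((1−η)n) ≥ (F_Λ(x) − F_Λ(ξx))/((1 − ξη³)x). -/

import Mathlib

open Filter Topology

/-- The counting function of the sequence `Λ`: `F_Λ(t) = #{k : Λ k ≤ t}` for `t > 0`
and `0` otherwise. -/
noncomputable def countFn (Λ : ℕ → ℝ) (t : ℝ) : ℝ :=
  if 0 < t then (Nat.card {k : ℕ | Λ k ≤ t} : ℝ) else 0

/-- A sequence of intervals `((a n, b n])_n` with `0 < a n < b n ≤ a (n+1)` is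
*substantial* if `Σ (b n / a n - 1)² = ∞`. -/
def IsSubstantial (a b : ℕ → ℝ) : Prop :=
  (∀ n, 0 < a n ∧ a n < b n ∧ b n ≤ a (n + 1)) ∧
    ¬ Summable (fun n => (b n / a n - 1) ^ 2)

/-- `limsup_n b n / a n`, taken in the extended reals. -/
noncomputable def ratioLimsup (a b : ℕ → ℝ) : EReal :=
  Filter.limsup (fun n => ((b n / a n : ℝ) : EReal)) Filter.atTop

/-- `ℓ_I = liminf_n (F_Λ(b n) - F_Λ(a n)) / (b n - a n)`, in the extended reals. -/
noncomputable def ellOf (Λ : ℕ → ℝ) (a b : ℕ → ℝ) : EReal :=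
  Filter.liminf
    (fun n => (((countFn Λ (b n) - countFn Λ (a n)) / (b n - a n) : ℝ) : EReal))
    Filter.atTop

/-- The set `𝔯_A` of admissible rates `R ≥ 0`. -/
def RSet (Λ : ℕ → ℝ) (A : Set EReal) : Set ℝ :=
  {R | 0 ≤ R ∧ ∃ a b : ℕ → ℝ, IsSubstantial a b ∧ ratioLimsup a b ∈ A ∧
    ∀ᶠ n in Filter.atTop, R ≤ (countFn Λ (b n) - countFn Λ (a n)) / (b n - a n)}

/-- The (restricted) Beurling–Malliavin density `b_A(Λ) = sup 𝔯_A`. -/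
noncomputable def bmDensity (Λ : ℕ → ℝ) (A : Set EReal) : EReal :=
  sSup ((fun r : ℝ => (r : EReal)) '' RSet Λ A)

lemma countFn_mono (Λ : ℕ → ℝ) (htend : Filter.Tendsto Λ Filter.atTop Filter.atTop) :
    Monotone (countFn Λ) := by
  intro s t hst
  unfold countFn
  split_ifs with hs ht ht
  · have hfin : {k : ℕ | Λ k ≤ t}.Finite := by
      obtain ⟨N, hN⟩ := (htend.eventually_gt_atTop t).exists_forall_of_atTop
      exact (Set.finite_Iio N).subset fun k hk => by
        by_contra h
        exact absurd (hk : Λ k ≤ t) (not_le.2 (hN k (not_lt.1 h)))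
    have : Nat.card {k : ℕ | Λ k ≤ s} ≤ Nat.card {k : ℕ | Λ k ≤ t} := by
      rw [Nat.card_coe_set_eq, Nat.card_coe_set_eq]
      exact Set.ncard_le_ncard (fun k hk => le_trans hk hst) hfin
    exact_mod_cast this
  · exact absurd (hs.trans_le hst) ht
  · positivity
  · exact le_refl _

noncomputable def seqN (η x : ℝ) : ℕ → ℕ
  | 0 => ⌈x⌉₊
  | j+1 => ⌈η * seqN η x j⌉₊

lemma seqN_lb (η x : ℝ) (hη : 0 ≤ η) (j : ℕ) :
    η ^ j * x ≤ (seqN η x j : ℝ) := by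
  induction j with
  | zero => simpa [seqN] using Nat.le_ceil x
  | succ j ih =>
    calc η ^ (j+1) * x = η * (η ^ j * x) := by ring
    _ ≤ η * (seqN η x j : ℝ) := mul_le_mul_of_nonneg_left ih hη
    _ ≤ (seqN η x (j+1) : ℝ) := Nat.le_ceil _

lemma seqN_ub (η x : ℝ) (hη0 : 0 ≤ η) (hη1 : η < 1) (hx : 0 ≤ x) (j : ℕ) :
    (seqN η x j : ℝ) ≤ η ^ j * x + (1 + 1 / (1 - η)) := by
  have h1 : (0:ℝ) < 1 - η := by linarith
  have hC : (1:ℝ) ≤ 1 + 1 / (1 - η) := by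
    have : 0 < 1 / (1-η) := by positivity
    linarith
  induction j with
  | zero =>
    have h2 : (⌈x⌉₊ : ℝ) ≤ x + 1 := (Nat.ceil_lt_add_one hx).le
    simp only [seqN, pow_zero, one_mul]
    linarith
  | succ j ih =>
    have hm : (0:ℝ) ≤ η * (seqN η x j : ℝ) := by positivity
    have hstep : (seqN η x (j+1) : ℝ) ≤ η * (seqN η x j : ℝ) + 1 :=
      (Nat.ceil_lt_add_one hm).le
    have h3 : η * (seqN η x j : ℝ) ≤ η * (η ^ j * x + (1 + 1 / (1 - η))) :=
      mul_le_mul_of_nonneg_left ih hη0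
    have hkey : η * (1 + 1 / (1 - η)) + 1 ≤ 1 + 1 / (1 - η) := by
      have h2 : η / (1-η) + 1 = 1 / (1-η) := by field_simp; ring
      have h4 : η * (1 / (1-η)) = η / (1-η) := by ring
      nlinarith
    calc (seqN η x (j+1) : ℝ) ≤ η * (η ^ j * x + (1 + 1 / (1 - η))) + 1 := by linarith
    _ = η ^ (j+1) * x + (η * (1 + 1 / (1-η)) + 1) := by ring
    _ ≤ η ^ (j+1) * x + (1 + 1 / (1 - η)) := by linarith

set_option maxHeartbeats 1000000 in
theorem stmt_17 (Λ : ℕ → ℝ) (hmono : StrictMono Λ) (h0 : 0 ≤ Λ 0)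
    (htend : Filter.Tendsto Λ Filter.atTop Filter.atTop) (ξ η : ℝ) (hξ : ξ ∈ Set.Ioo (0 : ℝ) 1) (hη : η ∈ Set.Ioo ξ 1) :
    ∃ M : ℝ, 0 < M ∧ ∀ x : ℝ, M < x → ∃ n : ℕ, 0 < n ∧
      (countFn Λ x - countFn Λ (ξ * x)) / ((1 - ξ * η ^ 3) * x) ≤
        (countFn Λ (n : ℝ) - countFn Λ (η * (n : ℝ))) / ((1 - η) * (n : ℝ)) := by
  classical
  obtain ⟨hξ0, hξ1⟩ := hξ
  obtain ⟨hξη, hη1⟩ := hη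
  have hη0 : 0 < η := hξ0.trans hξη
  have hF := countFn_mono Λ htend
  set F := countFn Λ with hFdef
  -- choose K
  have hKex : ∃ m, η ^ (m+1) < ξ := by
    obtain ⟨m, hm⟩ := exists_pow_lt_of_lt_one hξ0 hη1
    exact ⟨m, lt_of_le_of_lt (by
      rw [pow_succ']
      exact mul_le_of_le_one_left (pow_nonneg hη0.le m) hη1.le) hm⟩
  set K := Nat.find hKex with hKdef
  have hK1 : η ^ (K+1) < ξ := Nat.find_spec hKex
  have hKge : ξ * η ≤ η ^ (K+1) := by
    rcases Nat.eq_zero_or_pos K with h0K | hposK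
    · rw [h0K]; simpa [mul_comm] using mul_le_of_le_one_left hη0.le hξ1.le
    · have hmin := Nat.find_min hKex (Nat.sub_lt hposK one_pos)
      have hKm : K - 1 + 1 = K := by omega
      rw [hKm] at hmin
      push_neg at hmin
      calc ξ * η ≤ η ^ K * η := mul_le_mul_of_nonneg_right hmin hη0.le
      _ = η ^ (K+1) := (pow_succ η K).symm
  have hK2 : ξ * η ^ 3 < η ^ (K+1) := by
    have h5 : η ^ 2 < 1 := by nlinarith
    have h6 : η ^ 3 < η := by nlinarith
    nlinarith
  have hden1 : (0:ℝ) < 1 - ξ * η ^ 3 := by nlinarith [pow_nonneg hη0.le 3, pow_lt_one₀ hη0.le hη1 (by norm_num : 3 ≠ 0)]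
  have h1η : (0:ℝ) < 1 - η := by linarith
  set C : ℝ := 1 + 1 / (1 - η) with hCdef
  have hC1 : (1:ℝ) ≤ C := by
    have : 0 < 1 / (1-η) := by positivity
    simp only [hCdef]; linarith
  set δ₁ : ℝ := ξ - η ^ (K+1) with hδ₁
  set δ₂ : ℝ := η ^ (K+1) - ξ * η ^ 3 with hδ₂
  have hδ₁0 : 0 < δ₁ := by simp only [hδ₁]; linarith
  have hδ₂0 : 0 < δ₂ := by simp only [hδ₂]; linarith
  have hηK : (0:ℝ) < η ^ K := pow_pos hη0 K
  refine ⟨max (C/δ₁) (max ((K+1)*C/δ₂) (1/η^K)) + 1, by positivity, fun x hx => ?_⟩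
  have hx0 : 0 < x := by
    have h1 : (0:ℝ) < 1/η^K := by positivity
    have := le_max_right ((K+1)*C/δ₂) (1/η^K)
    have := le_max_right (C/δ₁) (max ((K+1)*C/δ₂) (1/η^K))
    linarith [le_max_right (C/δ₁) (max ((K+1)*C/δ₂) (1/η^K)),
      le_max_right ((K+1)*C/δ₂) (1/η^K)]
  have hx1 : C ≤ δ₁ * x := by
    rw [← div_le_iff₀' hδ₁0]
    calc C/δ₁ ≤ max (C/δ₁) (max ((K+1)*C/δ₂) (1/η^K)) := le_max_left _ _
    _ ≤ x := by linarith
  have hx2 : (K+1)*C ≤ δ₂ * x := by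
    rw [← div_le_iff₀' hδ₂0]
    calc (K+1)*C/δ₂ ≤ max (C/δ₁) (max ((K+1)*C/δ₂) (1/η^K)) :=
      le_trans (le_max_left _ _) (le_max_right _ _)
    _ ≤ x := by linarith
  have hx3 : 1 ≤ η^K * x := by
    rw [← div_le_iff₀' hηK]
    calc 1/η^K ≤ max (C/δ₁) (max ((K+1)*C/δ₂) (1/η^K)) :=
      le_trans (le_max_right _ _) (le_max_right _ _)
    _ ≤ x := by linarith
  set n : ℕ → ℕ := seqN η x with hn
  have hlb : ∀ j, η ^ j * x ≤ (n j : ℝ) := seqN_lb η x hη0.le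
  have hub : ∀ j, (n j : ℝ) ≤ η ^ j * x + C := seqN_ub η x hη0.le hη1 hx0.le
  have hone : ∀ j ≤ K, (1:ℝ) ≤ (n j : ℝ) := fun j hj => by
    have h1 : η ^ K ≤ η ^ j := pow_le_pow_of_le_one hη0.le hη1.le hj
    have := hlb j
    nlinarith
  have hchain : ∀ j, η * (n j : ℝ) ≤ (n (j+1) : ℝ) := fun j => Nat.le_ceil _
  have hcovtop : x ≤ (n 0 : ℝ) := Nat.le_ceil x
  have hcovbot : η * (n K : ℝ) ≤ ξ * x := by
    have h1 : η * (n K : ℝ) ≤ η * (η ^ K * x + C) :=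
      mul_le_mul_of_nonneg_left (hub K) hη0.le
    have h2 : η * (η ^ K * x + C) = η ^ (K+1) * x + η * C := by ring
    have h3 : η * C ≤ C := mul_le_of_le_one_left (by linarith) hη1.le
    have : η ^ (K+1) * x + δ₁ * x = ξ * x := by simp only [hδ₁]; ring
    linarith
  -- telescoping
  have htel : ∀ m, F (n 0 : ℝ) - F (η * (n m : ℝ)) ≤
      ∑ j ∈ Finset.range (m+1), (F (n j : ℝ) - F (η * (n j : ℝ))) := by
    intro m
    induction m with
    | zero => simp
    | succ m ih =>
      rw [Finset.sum_range_succ]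
      have : F (η * (n m : ℝ)) ≤ F (n (m+1) : ℝ) := hF (hchain m)
      linarith
  have hnum : F x - F (ξ * x) ≤
      ∑ j ∈ Finset.range (K+1), (F (n j : ℝ) - F (η * (n j : ℝ))) := by
    have h1 : F x ≤ F (n 0 : ℝ) := hF hcovtop
    have h2 : F (η * (n K : ℝ)) ≤ F (ξ * x) := hF hcovbot
    linarith [htel K]
  -- denominator sum bound
  have hdsum : ∑ j ∈ Finset.range (K+1), (1 - η) * (n j : ℝ) ≤ (1 - ξ * η ^ 3) * x := by
    have h1 : ∑ j ∈ Finset.range (K+1), (n j : ℝ) ≤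
        ∑ j ∈ Finset.range (K+1), (η ^ j * x + C) :=
      Finset.sum_le_sum (fun j _ => hub j)
    have h2 : ∑ j ∈ Finset.range (K+1), (η ^ j * x + C) =
        (∑ j ∈ Finset.range (K+1), η ^ j) * x + (K+1) * C := by
      rw [Finset.sum_add_distrib, Finset.sum_const, Finset.card_range, Finset.sum_mul]
      push_cast; ring
    have hgeo : (1-η) * ∑ j ∈ Finset.range (K+1), η ^ j = 1 - η ^ (K+1) := by
      have hg := geom_sum_mul η (K+1)
      linear_combination -hg
    have hKC0 : (0:ℝ) ≤ ((K:ℝ)+1) * C := by positivity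
    have h3 : (1-η) * (((K:ℝ)+1) * C) ≤ ((K:ℝ)+1) * C := by nlinarith
    have h4 : (1 - η ^ (K+1)) * x + δ₂ * x = (1 - ξ * η ^ 3) * x := by
      simp only [hδ₂]; ring
    calc ∑ j ∈ Finset.range (K+1), (1 - η) * (n j : ℝ)
        = (1-η) * ∑ j ∈ Finset.range (K+1), (n j : ℝ) := by rw [Finset.mul_sum]
      _ ≤ (1-η) * ((∑ j ∈ Finset.range (K+1), η ^ j) * x + (K+1) * C) := by
          apply mul_le_mul_of_nonneg_left _ h1η.le
          rw [← h2]; exact h1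
      _ = ((1-η) * ∑ j ∈ Finset.range (K+1), η ^ j) * x + (1-η)*(((K:ℝ)+1) * C) := by
          push_cast; ring
      _ = (1 - η ^ (K+1)) * x + (1-η)*(((K:ℝ)+1) * C) := by rw [hgeo]
      _ ≤ (1 - η ^ (K+1)) * x + δ₂ * x := by linarith
      _ = (1 - ξ * η ^ 3) * x := h4
  -- maximization
  obtain ⟨j₀, hj₀mem, hj₀max⟩ := Finset.exists_max_image (Finset.range (K+1))
    (fun j => (F (n j:ℝ) - F (η * (n j:ℝ))) / ((1-η) * (n j:ℝ)))
    ⟨0, Finset.mem_range.2 (Nat.succ_pos K)⟩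
  have hj₀K : j₀ ≤ K := Nat.lt_succ_iff.1 (Finset.mem_range.1 hj₀mem)
  set r := (F (n j₀:ℝ) - F (η * (n j₀:ℝ))) / ((1-η) * (n j₀:ℝ)) with hr
  have hd : ∀ j ≤ K, 0 < (1-η) * (n j:ℝ) := fun j hj =>
    mul_pos h1η (by linarith [hone j hj])
  have hg : ∀ j ≤ K, 0 ≤ F (n j:ℝ) - F (η * (n j:ℝ)) := fun j hj => by
    have h5 : η * (n j:ℝ) ≤ (n j:ℝ) := by nlinarith [hone j hj]
    linarith [hF h5]
  have hr0 : 0 ≤ r := div_nonneg (hg j₀ hj₀K) (hd j₀ hj₀K).le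
  have hsum : ∑ j ∈ Finset.range (K+1), (F (n j:ℝ) - F (η * (n j:ℝ))) ≤
      r * ((1 - ξ*η^3) * x) := by
    calc ∑ j ∈ Finset.range (K+1), (F (n j:ℝ) - F (η * (n j:ℝ)))
        ≤ ∑ j ∈ Finset.range (K+1), r * ((1-η) * (n j:ℝ)) := by
          refine Finset.sum_le_sum fun j hj => ?_
          have hjK : j ≤ K := Nat.lt_succ_iff.1 (Finset.mem_range.1 hj)
          have hdj := hd j hjK
          have hmax := hj₀max j hj
          calc F (n j:ℝ) - F (η * (n j:ℝ))
              = ((F (n j:ℝ) - F (η * (n j:ℝ))) / ((1-η)*(n j:ℝ))) * ((1-η)*(n j:ℝ)) :=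
                (div_mul_cancel₀ _ hdj.ne').symm
            _ ≤ r * ((1-η)*(n j:ℝ)) := mul_le_mul_of_nonneg_right hmax hdj.le
      _ = r * ∑ j ∈ Finset.range (K+1), ((1-η) * (n j:ℝ)) := by rw [Finset.mul_sum]
      _ ≤ r * ((1 - ξ*η^3) * x) := mul_le_mul_of_nonneg_left hdsum hr0
  refine ⟨n j₀, ?_, ?_⟩
  · have h6 := hone j₀ hj₀K
    have h7 : 1 ≤ n j₀ := by exact_mod_cast h6
    omega
  · rw [div_le_iff₀ (by positivity : (0:ℝ) < (1 - ξ*η^3) * x)]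
    exact hnum.trans hsum
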